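/- arXiv:2006.00496 — 2 statements merged into one kernel-verified Lean document; each statement's English description precedes it below -/
import Mathlib

section
/- For m, n ≥ 0, the q-identity Σ_{k=0}^{⌊n/2⌋} [m+k choose k]_{q^2} · [m+1 choose n−2k]_q · q^{C(n−2k,2)} = [m+n choose n]_q holds as an identity of polynomials in q. -/
open Polynomial

/-- Gaussian binomial coefficient `[n choose k]_q` as a polynomial in `ℤ[q]`,
defined by the Pascal-type recurrence; it is `0` when `k > n`. -/
noncomputable def gauss : ℕ → ℕ → Polynomial ℤ
  | _, 0 => 1
  | 0, _ + 1 => 0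
  | n + 1, k + 1 => gauss n (k + 1) + Polynomial.X ^ (n - k) * gauss n k

/-- `p(N,k,n)`: number of partitions of `n` into at most `k` parts, each part
positive and at most `N`. -/
noncomputable def pcount (N k n : ℕ) : ℕ :=
  Nat.card {s : Multiset ℕ //
    s.sum = n ∧ s.card ≤ k ∧ ∀ x ∈ s, 0 < x ∧ x ≤ N}

/-- `p̄_r(N₁,N₂,k₁,k₂,n)`: number of two-colored partitions of `n` with at most `k₁`
parts of the first kind, each positive, divisible by `r` and at most `N₁·r`, and at
most `k₂` parts of the second kind, each positive and at most `N₂`. -/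
noncomputable def pbar (r N1 N2 k1 k2 n : ℕ) : ℕ :=
  Nat.card {p : Multiset ℕ × Multiset ℕ //
    p.1.sum + p.2.sum = n ∧ p.1.card ≤ k1 ∧ p.2.card ≤ k2 ∧
    (∀ x ∈ p.1, 0 < x ∧ r ∣ x ∧ x ≤ N1 * r) ∧ (∀ x ∈ p.2, 0 < x ∧ x ≤ N2)}

/-- `p̄_r` with integer arguments: zero if any argument is negative. -/
noncomputable def pbarZ (r : ℕ) (N1 N2 k1 k2 n : ℤ) : ℕ :=
  if 0 ≤ N1 ∧ 0 ≤ N2 ∧ 0 ≤ k1 ∧ 0 ≤ k2 ∧ 0 ≤ n then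
    pbar r N1.toNat N2.toNat k1.toNat k2.toNat n.toNat
  else 0

/-- `Q̄_r(N₁,N₂,k₁,k₂,n)`: number of two-colored partitions of `n` with exactly `k₁`
distinct parts of the first kind, each positive, divisible by `r` and at most `N₁·r`,
and exactly `k₂` distinct parts of the second kind, each positive and at most `N₂`. -/
noncomputable def Qbar (r N1 N2 k1 k2 n : ℕ) : ℕ :=
  Nat.card {p : Multiset ℕ × Multiset ℕ //
    p.1.sum + p.2.sum = n ∧ p.1.Nodup ∧ p.2.Nodup ∧ p.1.card = k1 ∧ p.2.card = k2 ∧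
    (∀ x ∈ p.1, 0 < x ∧ r ∣ x ∧ x ≤ N1 * r) ∧ (∀ x ∈ p.2, 0 < x ∧ x ≤ N2)}


lemma gauss_zero_right (n : ℕ) : gauss n 0 = 1 := by cases n <;> simp [gauss]

lemma gauss_succ (n k : ℕ) :
    gauss (n + 1) (k + 1) = gauss n (k + 1) + X ^ (n - k) * gauss n k := by
  simp [gauss]

lemma gauss_eq_zero (n : ℕ) : ∀ k, n < k → gauss n k = 0 := by
  induction n with
  | zero => intro k hk; obtain ⟨k, rfl⟩ : ∃ k', k = k' + 1 := ⟨k - 1, by omega⟩; simp [gauss]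
  | succ n ih =>
    intro k hk
    obtain ⟨k, rfl⟩ : ∃ k', k = k' + 1 := ⟨k - 1, by omega⟩
    rw [gauss_succ, ih _ (by omega), ih _ (by omega)]
    simp

lemma gauss_self (n : ℕ) : gauss n n = 1 := by
  induction n with
  | zero => simp [gauss]
  | succ n ih => rw [gauss_succ, gauss_eq_zero n (n+1) (by omega), ih]; simp

lemma term1 (a b n k : ℕ) (h : 2 * k ≤ n) :
    (gauss (a + k) k).comp (X ^ 2) * gauss (b + 1) ((n + 1) - 2 * k) *
        X ^ ((n + 1) - 2 * k).choose 2
      = (gauss (a + k) k).comp (X ^ 2) * gauss b ((n + 1) - 2 * k) *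
          X ^ ((n + 1) - 2 * k).choose 2
        + X ^ b * ((gauss (a + k) k).comp (X ^ 2) * gauss b (n - 2 * k) *
            X ^ (n - 2 * k).choose 2) := by
  have h1 : (n + 1) - 2 * k = (n - 2 * k) + 1 := by omega
  rw [h1, gauss_succ]
  set i := n - 2 * k with hi
  by_cases hib : i ≤ b
  · have h3 : (i + 1).choose 2 = i + i.choose 2 := by
      rw [Nat.choose_succ_succ, Nat.choose_one_right]
    have h2 : (X : Polynomial ℤ) ^ (b - i) * X ^ ((i + 1).choose 2)
        = X ^ b * X ^ (i.choose 2) := by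
      rw [← pow_add, ← pow_add]
      congr 1
      omega
    linear_combination (gauss (a + k) k).comp ((X : Polynomial ℤ) ^ 2) * gauss b i * h2
  · rw [gauss_eq_zero b i (by omega)]
    ring

lemma term2 (a b n l : ℕ) :
    (gauss (a + 1 + (l + 1)) (l + 1)).comp (X ^ 2) * gauss b ((n + 2) - 2 * (l + 1)) *
        X ^ ((n + 2) - 2 * (l + 1)).choose 2
      = (gauss (a + (l + 1)) (l + 1)).comp (X ^ 2) * gauss b ((n + 2) - 2 * (l + 1)) *
          X ^ ((n + 2) - 2 * (l + 1)).choose 2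
        + X ^ (2 * (a + 1)) * ((gauss (a + 1 + l) l).comp (X ^ 2) * gauss b (n - 2 * l) *
            X ^ (n - 2 * l).choose 2) := by
  have h1 : (n + 2) - 2 * (l + 1) = n - 2 * l := by omega
  have h2 : a + 1 + (l + 1) = (a + l + 1) + 1 := by omega
  rw [h1, h2, gauss_succ]
  have h3 : (a + l + 1) - l = a + 1 := by omega
  rw [h3, add_comp, mul_comp, X_pow_comp]
  have h4 : ((X : Polynomial ℤ) ^ 2) ^ (a + 1) = X ^ (2 * (a + 1)) := by rw [← pow_mul]
  rw [h4]
  rw [show a + (l + 1) = a + l + 1 from by omega, show a + 1 + l = a + l + 1 from by omega]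
  ring

lemma step1 (a b n : ℕ) :
    ∑ k ∈ Finset.range ((n + 1) / 2 + 1),
        (gauss (a + k) k).comp (X ^ 2) * gauss (b + 1) ((n + 1) - 2 * k) *
          X ^ ((n + 1) - 2 * k).choose 2
      = (∑ k ∈ Finset.range ((n + 1) / 2 + 1),
          (gauss (a + k) k).comp (X ^ 2) * gauss b ((n + 1) - 2 * k) *
            X ^ ((n + 1) - 2 * k).choose 2)
        + X ^ b * ∑ k ∈ Finset.range (n / 2 + 1),
            (gauss (a + k) k).comp (X ^ 2) * gauss b (n - 2 * k) *
              X ^ (n - 2 * k).choose 2 := by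
  rcases Nat.even_or_odd n with ⟨t, ht⟩ | ⟨t, ht⟩
  · have hb1 : (n + 1) / 2 = t := by omega
    have hb2 : n / 2 = t := by omega
    rw [hb1, hb2]
    rw [Finset.sum_congr rfl fun k hk =>
      term1 a b n k (by simp only [Finset.mem_range] at hk; omega)]
    rw [Finset.sum_add_distrib, ← Finset.mul_sum]
  · have hb1 : (n + 1) / 2 + 1 = (t + 1) + 1 := by omega
    have hb2 : n / 2 = t := by omega
    rw [hb1, hb2, Finset.sum_range_succ]
    conv_rhs => rw [Finset.sum_range_succ]
    have hz : (n + 1) - 2 * (t + 1) = 0 := by omega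
    rw [hz, gauss_zero_right, gauss_zero_right]
    rw [Finset.sum_congr rfl fun k hk =>
      term1 a b n k (by simp only [Finset.mem_range] at hk; omega)]
    rw [Finset.sum_add_distrib, ← Finset.mul_sum]
    ring

lemma step2 (a b n : ℕ) :
    ∑ k ∈ Finset.range ((n + 2) / 2 + 1),
        (gauss (a + 1 + k) k).comp (X ^ 2) * gauss b ((n + 2) - 2 * k) *
          X ^ ((n + 2) - 2 * k).choose 2
      = (∑ k ∈ Finset.range ((n + 2) / 2 + 1),
          (gauss (a + k) k).comp (X ^ 2) * gauss b ((n + 2) - 2 * k) *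
            X ^ ((n + 2) - 2 * k).choose 2)
        + X ^ (2 * (a + 1)) * ∑ k ∈ Finset.range (n / 2 + 1),
            (gauss (a + 1 + k) k).comp (X ^ 2) * gauss b (n - 2 * k) *
              X ^ (n - 2 * k).choose 2 := by
  have hb : (n + 2) / 2 + 1 = (n / 2 + 1) + 1 := by omega
  rw [hb, Finset.sum_range_succ']
  conv_rhs => rw [Finset.sum_range_succ']
  simp only [Nat.add_zero, gauss_zero_right, one_comp, one_mul, Nat.mul_zero]
  rw [Finset.sum_congr rfl fun l _ => term2 a b n l]
  rw [Finset.sum_add_distrib, ← Finset.mul_sum]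
  ring

theorem stmt12 (m n : ℕ) :
    ∑ k ∈ Finset.range (n / 2 + 1),
        (gauss (m + k) k).comp (Polynomial.X ^ 2) * gauss (m + 1) (n - 2 * k) *
          Polynomial.X ^ (n - 2 * k).choose 2 =
      gauss (m + n) n := by
  induction m generalizing n with
  | zero =>
    simp only [Nat.zero_add]
    rw [gauss_self]
    rw [Finset.sum_eq_single (n / 2)]
    · rw [gauss_self, one_comp, one_mul]
      have h1 : n - 2 * (n / 2) = n % 2 := by omega
      rw [h1]
      rcases Nat.mod_two_eq_zero_or_one n with h | h <;> rw [h]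
      · rw [gauss_zero_right]; norm_num
      · have : gauss 1 1 = 1 := gauss_self 1
        rw [this]; norm_num
    · intro k hk hne
      simp only [Finset.mem_range] at hk
      obtain ⟨j, hj⟩ : ∃ j, n - 2 * k = j + 2 := ⟨n - 2 * k - 2, by omega⟩
      rw [hj, gauss_eq_zero 1 (j + 2) (by omega)]
      ring
    · intro h
      exact absurd (Finset.self_mem_range_succ _) h
  | succ M ih =>
    induction n using Nat.strong_induction_on with
    | _ n ihn =>
      match n with
      | 0 =>
        simp only [Nat.zero_div, Nat.zero_add, Finset.sum_range_one, Nat.mul_zero,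
          Nat.sub_zero, Nat.add_zero, gauss_zero_right, one_comp, one_mul]
        norm_num [gauss_zero_right]
      | 1 =>
        norm_num [Finset.sum_range_one, gauss_zero_right]
      | (n + 2) =>
        rw [step2 M (M + 1 + 1) n, step1 M (M + 1) (n + 1)]
        rw [ih (n + 2), ih (n + 1), ihn n (by omega)]
        have r1 : gauss (M + 1 + (n + 2)) (n + 2)
            = gauss (M + (n + 2)) (n + 2) + X ^ (M + 1) * gauss (M + n + 2) (n + 1) := by
          rw [show M + 1 + (n + 2) = (M + n + 2) + 1 from by omega,
            show (n + 2) = (n + 1) + 1 from rfl, gauss_succ,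
            show M + n + 2 - (n + 1) = M + 1 from by omega,
            show M + (n + 1 + 1) = M + n + 2 from by omega]
        have r2 : gauss (M + n + 2) (n + 1)
            = gauss (M + (n + 1)) (n + 1) + X ^ (M + 1) * gauss (M + 1 + n) n := by
          rw [show M + n + 2 = (M + n + 1) + 1 from rfl, gauss_succ,
            show M + n + 1 - n = M + 1 from by omega,
            show M + (n + 1) = M + n + 1 from by omega,
            show M + 1 + n = M + n + 1 from by omega]
        rw [r1, r2]
        ring
end

section
/- For N, k, n ≥ 0, Σ_{j=0}^{⌊k/4⌋} p̄_4(N, N+1−k+4j, j, k−4j, n − C(k−4j,2)) = Σ_{j=0}^{⌊k/2⌋} (−1)^j · p̄_2(N, N, j, k−2j, n), where terms with a negative last argument are zero. -/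
open Polynomial

section Helpers

lemma natCard_sigma {ι : Type*} [Fintype ι] (f : ι → Type*) [∀ i, Finite (f i)] :
    Nat.card (Σ i, f i) = ∑ i, Nat.card (f i) := by
  classical
  haveI := fun i => Fintype.ofFinite (f i)
  simp [Nat.card_eq_fintype_card, Fintype.card_sigma]

/-- multisets of positive naturals with fixed sum satisfying any predicate form a finite type -/
lemma finite_msub (n : ℕ) (p : Multiset ℕ → Prop) (hp : ∀ s, p s → s.sum = n ∧ ∀ x ∈ s, 0 < x) :
    Finite {s : Multiset ℕ // p s} := by
  apply Finite.of_injective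
    (fun s => (⟨s.1, fun {x} hx => (hp s.1 s.2).2 x hx, (hp s.1 s.2).1⟩ : Nat.Partition n))
  intro a b h
  exact Subtype.ext (congrArg Nat.Partition.parts h)

instance pcount_finite (N k n : ℕ) :
    Finite {s : Multiset ℕ // s.sum = n ∧ s.card ≤ k ∧ ∀ x ∈ s, 0 < x ∧ x ≤ N} := by
  apply finite_msub n
  exact fun s hs => ⟨hs.1, fun x hx => (hs.2.2 x hx).1⟩


/-- decomposition of a two-part condition into a sigma over the antidiagonal -/
def pairEquiv (n : ℕ) (C1 C2 : Multiset ℕ → Prop) :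
    {p : Multiset ℕ × Multiset ℕ // p.1.sum + p.2.sum = n ∧ C1 p.1 ∧ C2 p.2} ≃
      Σ ab : (Finset.HasAntidiagonal.antidiagonal n : Finset (ℕ × ℕ)),
        {s : Multiset ℕ // s.sum = ab.1.1 ∧ C1 s} × {s : Multiset ℕ // s.sum = ab.1.2 ∧ C2 s} where
  toFun p := ⟨⟨(p.1.1.sum, p.1.2.sum), by simp [p.2.1]⟩,
    ⟨⟨p.1.1, rfl, p.2.2.1⟩, ⟨p.1.2, rfl, p.2.2.2⟩⟩⟩
  invFun x := ⟨(x.2.1.1, x.2.2.1), by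
    obtain ⟨⟨⟨a, b⟩, hab⟩, ⟨⟨s, hs1, hs2⟩, ⟨t, ht1, ht2⟩⟩⟩ := x
    simp only [Finset.HasAntidiagonal.mem_antidiagonal] at hab
    exact ⟨by simp [hs1, ht1, hab], hs2, ht2⟩⟩
  left_inv p := rfl
  right_inv x := by
    obtain ⟨⟨⟨a, b⟩, hab⟩, ⟨⟨s, hs1, hs2⟩, ⟨t, ht1, ht2⟩⟩⟩ := x
    have ha : s.sum = a := hs1
    have hb : t.sum = b := ht1
    subst ha hb
    rfl


noncomputable def pA (r N k a : ℕ) : ℕ :=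
  Nat.card {s : Multiset ℕ // s.sum = a ∧ s.card ≤ k ∧ ∀ x ∈ s, 0 < x ∧ r ∣ x ∧ x ≤ N * r}

instance pA_finite (r N k a : ℕ) :
    Finite {s : Multiset ℕ // s.sum = a ∧ s.card ≤ k ∧ ∀ x ∈ s, 0 < x ∧ r ∣ x ∧ x ≤ N * r} := by
  apply finite_msub a
  exact fun s hs => ⟨hs.1, fun x hx => (hs.2.2 x hx).1⟩

lemma natCard_pair (n : ℕ) (C1 C2 : Multiset ℕ → Prop)
    [∀ a : ℕ, Finite {s : Multiset ℕ // s.sum = a ∧ C1 s}]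
    [∀ a : ℕ, Finite {s : Multiset ℕ // s.sum = a ∧ C2 s}] :
    Nat.card {p : Multiset ℕ × Multiset ℕ // p.1.sum + p.2.sum = n ∧ C1 p.1 ∧ C2 p.2} =
      ∑ ab ∈ Finset.HasAntidiagonal.antidiagonal n,
        Nat.card {s : Multiset ℕ // s.sum = ab.1 ∧ C1 s} *
          Nat.card {s : Multiset ℕ // s.sum = ab.2 ∧ C2 s} := by
  rw [Nat.card_congr (pairEquiv n C1 C2), natCard_sigma]
  rw [← Finset.sum_attach (Finset.HasAntidiagonal.antidiagonal n)
    (fun ab => Nat.card {s : Multiset ℕ // s.sum = ab.1 ∧ C1 s} *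
      Nat.card {s : Multiset ℕ // s.sum = ab.2 ∧ C2 s})]
  exact Finset.sum_congr rfl fun ab _ => Nat.card_prod _ _

lemma pbar_conv (r N1 N2 k1 k2 n : ℕ) :
    pbar r N1 N2 k1 k2 n = ∑ ab ∈ Finset.HasAntidiagonal.antidiagonal n, pA r N1 k1 ab.1 * pcount N2 k2 ab.2 := by
  unfold pbar pA pcount
  rw [Nat.card_congr (Equiv.subtypeEquivRight (fun p => by tauto :
    ∀ p : Multiset ℕ × Multiset ℕ,
      (p.1.sum + p.2.sum = n ∧ p.1.card ≤ k1 ∧ p.2.card ≤ k2 ∧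
        (∀ x ∈ p.1, 0 < x ∧ r ∣ x ∧ x ≤ N1 * r) ∧ (∀ x ∈ p.2, 0 < x ∧ x ≤ N2)) ↔
      (p.1.sum + p.2.sum = n ∧
        (p.1.card ≤ k1 ∧ ∀ x ∈ p.1, 0 < x ∧ r ∣ x ∧ x ≤ N1 * r) ∧
        (p.2.card ≤ k2 ∧ ∀ x ∈ p.2, 0 < x ∧ x ≤ N2))))]
  exact natCard_pair n (fun s => s.card ≤ k1 ∧ ∀ x ∈ s, 0 < x ∧ r ∣ x ∧ x ≤ N1 * r)
    (fun s => s.card ≤ k2 ∧ ∀ x ∈ s, 0 < x ∧ x ≤ N2)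

lemma sum_map_div {r : ℕ} (s : Multiset ℕ) (h : ∀ x ∈ s, r ∣ x) :
    (s.map (· / r)).sum = s.sum / r := by
  induction s using Multiset.induction with
  | empty => simp
  | cons a s ih =>
    simp only [Multiset.map_cons, Multiset.sum_cons]
    rw [ih (fun x hx => h x (Multiset.mem_cons_of_mem hx)),
      Nat.add_div_of_dvd_left (Multiset.dvd_sum (fun x hx => h x (Multiset.mem_cons_of_mem hx)))]

lemma pA_eq (r N k a : ℕ) (hr : 0 < r) :
    pA r N k a = if r ∣ a then pcount N k (a / r) else 0 := by
  by_cases h : r ∣ a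
  · rw [if_pos h]
    unfold pA pcount
    apply Nat.card_congr
    refine ⟨fun s => ⟨s.1.map (· / r), ?_⟩, fun t => ⟨t.1.map (r * ·), ?_⟩, ?_, ?_⟩
    · obtain ⟨s, hsum, hcard, hmem⟩ := s
      refine ⟨by rw [sum_map_div s (fun x hx => (hmem x hx).2.1), hsum], by simpa using hcard, ?_⟩
      intro y hy
      obtain ⟨x, hx, rfl⟩ := Multiset.mem_map.mp hy
      obtain ⟨hpos, hdvd, hle⟩ := hmem x hx
      exact ⟨Nat.div_pos (Nat.le_of_dvd hpos hdvd) hr,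
        by calc x / r ≤ N * r / r := Nat.div_le_div_right hle
                _ = N := Nat.mul_div_cancel _ hr⟩
    · obtain ⟨t, hsum, hcard, hmem⟩ := t
      refine ⟨?_, by simpa using hcard, ?_⟩
      · rw [Multiset.sum_map_mul_left, Multiset.map_id', hsum, Nat.mul_div_cancel' h]
      · intro y hy
        obtain ⟨x, hx, rfl⟩ := Multiset.mem_map.mp hy
        obtain ⟨hpos, hle⟩ := hmem x hx
        exact ⟨Nat.mul_pos hr hpos, Dvd.intro x rfl,
          by rw [Nat.mul_comm N r]; exact Nat.mul_le_mul_left r hle⟩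
    · rintro ⟨s, hsum, hcard, hmem⟩
      apply Subtype.ext
      simp only [Multiset.map_map]
      rw [show s.map ((r * ·) ∘ (· / r)) = s.map id from
        Multiset.map_congr rfl (fun x hx => Nat.mul_div_cancel' (hmem x hx).2.1), Multiset.map_id]
    · rintro ⟨t, hsum, hcard, hmem⟩
      apply Subtype.ext
      simp only [Multiset.map_map]
      rw [show t.map ((· / r) ∘ (r * ·)) = t.map id from
        Multiset.map_congr rfl (fun x _ => Nat.mul_div_cancel_left x hr), Multiset.map_id]
  · rw [if_neg h]
    unfold pA
    rw [Nat.card_eq_zero]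
    left
    refine ⟨fun s => h ?_⟩
    obtain ⟨s, hsum, hcard, hmem⟩ := s
    rw [← hsum]
    exact Multiset.dvd_sum (fun x hx => (hmem x hx).2.1)

def splitEquiv {α : Type*} (p q : α → Prop) [DecidablePred q] :
    {x // p x} ≃ {x // p x ∧ q x} ⊕ {x // p x ∧ ¬ q x} where
  toFun x := if h : q x.1 then .inl ⟨x.1, x.2, h⟩ else .inr ⟨x.1, x.2, h⟩
  invFun := Sum.elim (fun y => ⟨y.1, y.2.1⟩) (fun y => ⟨y.1, y.2.1⟩)
  left_inv x := by by_cases h : q x.1 <;> simp [h]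
  right_inv y := by rcases y with y | y <;> simp [y.2.2]

lemma pcount_trivial_aux (n : ℕ) (Q : Multiset ℕ → Prop) (h0 : Q 0)
    (hforce : ∀ s, Q s → s = 0) :
    Nat.card {s : Multiset ℕ // s.sum = n ∧ Q s} = if n = 0 then 1 else 0 := by
  by_cases h : n = 0
  · subst h
    rw [if_pos rfl, Nat.card_eq_one_iff_unique]
    constructor
    · constructor
      rintro ⟨s, hs, hq⟩ ⟨t, ht, htq⟩
      apply Subtype.ext
      show s = t
      rw [hforce s hq, hforce t htq]
    · exact ⟨⟨0, rfl, h0⟩⟩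
  · rw [if_neg h, Nat.card_eq_zero]
    exact Or.inl ⟨fun s => h (by rw [← s.2.1, hforce s.1 s.2.2]; rfl)⟩

lemma pcount_zero_k (N n : ℕ) : pcount N 0 n = if n = 0 then 1 else 0 := by
  unfold pcount
  exact pcount_trivial_aux n _ ⟨by simp, by simp⟩
    (fun s hs => Multiset.card_eq_zero.mp (Nat.le_zero.mp hs.1))

lemma pcount_zero_N (k n : ℕ) : pcount 0 k n = if n = 0 then 1 else 0 := by
  unfold pcount
  exact pcount_trivial_aux n _ ⟨by simp, by simp⟩
    (fun s hs => Multiset.eq_zero_of_forall_notMem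
      (fun x hx => by have := hs.2 x hx; omega))

lemma pcount_rec (N k n : ℕ) :
    pcount (N + 1) (k + 1) n =
      pcount N (k + 1) n + if N + 1 ≤ n then pcount (N + 1) k (n - (N + 1)) else 0 := by
  classical
  unfold pcount
  set P : Multiset ℕ → Prop :=
    fun s => s.sum = n ∧ s.card ≤ k + 1 ∧ ∀ x ∈ s, 0 < x ∧ x ≤ N + 1 with hP
  haveI : Finite {s : Multiset ℕ // P s} := by
    apply finite_msub n; exact fun s hs => ⟨hs.1, fun x hx => (hs.2.2 x hx).1⟩
  haveI h2 : Finite {s : Multiset ℕ // P s ∧ (N + 1) ∈ s} := by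
    apply finite_msub n; exact fun s hs => ⟨hs.1.1, fun x hx => (hs.1.2.2 x hx).1⟩
  haveI h3 : Finite {s : Multiset ℕ // P s ∧ ¬ (N + 1) ∈ s} := by
    apply finite_msub n; exact fun s hs => ⟨hs.1.1, fun x hx => (hs.1.2.2 x hx).1⟩
  rw [Nat.card_congr (splitEquiv P (fun s => (N + 1) ∈ s)), Nat.card_sum]
  rw [Nat.add_comm]
  congr 1
  · -- part without N+1 : bound drops to N
    apply Nat.card_congr
    apply Equiv.subtypeEquivRight
    intro s
    constructor
    · rintro ⟨⟨h1, hc, hm⟩, hnm⟩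
      refine ⟨h1, hc, fun x hx => ⟨(hm x hx).1, ?_⟩⟩
      have := (hm x hx).2
      have hne : x ≠ N + 1 := fun he => hnm (he ▸ hx)
      omega
    · rintro ⟨h1, hc, hm⟩
      refine ⟨⟨h1, hc, fun x hx => ⟨(hm x hx).1, by have := (hm x hx).2; omega⟩, ⟩, fun hmem => ?_⟩
      have := (hm _ hmem).2
      omega
  · -- part with N+1 : erase it
    by_cases hn : N + 1 ≤ n
    · rw [if_pos hn]
      apply Nat.card_congr
      refine ⟨fun s => ⟨s.1.erase (N + 1), ?_⟩, fun t => ⟨(N + 1) ::ₘ t.1, ?_⟩, ?_, ?_⟩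
      · refine ⟨?_, ?_, fun x hx => s.2.1.2.2 x (Multiset.mem_of_mem_erase hx)⟩
        · have := Multiset.sum_erase s.2.2
          have := s.2.1.1
          omega
        · rw [Multiset.card_erase_of_mem s.2.2, Nat.pred_eq_sub_one]
          have := s.2.1.2.1
          omega
      · refine ⟨⟨?_, ?_, ?_⟩, Multiset.mem_cons_self _ _⟩
        · rw [Multiset.sum_cons, t.2.1]
          omega
        · rw [Multiset.card_cons]
          have := t.2.2.1
          omega
        · intro x hx
          rcases Multiset.mem_cons.mp hx with h | h
          · omega
          · exact t.2.2.2 x h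
      · rintro ⟨s, hs, hmem⟩
        exact Subtype.ext (Multiset.cons_erase hmem)
      · rintro ⟨t, ht⟩
        exact Subtype.ext (Multiset.erase_cons_head _ _)
    · rw [if_neg hn, Nat.card_eq_zero]
      refine Or.inl ⟨fun s => ?_⟩
      obtain ⟨s, ⟨h1, hc, hm⟩, hmem⟩ := s
      have := Multiset.single_le_sum (fun x _ => Nat.zero_le x) _ hmem
      omega

noncomputable abbrev Rq := PowerSeries ℤ
noncomputable abbrev Sz := PowerSeries Rq

/-- dilation of a power series: substitute `X ↦ X^r` -/
noncomputable def stretch (r : ℕ) (f : Rq) : Rq :=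
  PowerSeries.mk fun n => if r ∣ n then PowerSeries.coeff (n / r) f else 0

lemma coeff_stretch (r : ℕ) (f : Rq) (n : ℕ) :
    PowerSeries.coeff n (stretch r f) =
      if r ∣ n then PowerSeries.coeff (n / r) f else 0 := PowerSeries.coeff_mk _ _

lemma stretch_add (r : ℕ) (f g : Rq) : stretch r (f + g) = stretch r f + stretch r g := by
  ext n
  simp only [coeff_stretch, map_add]
  split <;> simp

lemma stretch_one (r : ℕ) (hr : 0 < r) : stretch r 1 = 1 := by
  ext n
  simp only [coeff_stretch, PowerSeries.coeff_one]
  by_cases hd : r ∣ n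
  · obtain ⟨c, rfl⟩ := hd
    rw [if_pos ⟨c, rfl⟩, Nat.mul_div_cancel_left c hr]
    rcases eq_or_ne c 0 with rfl | h
    · simp
    · rw [if_neg h, if_neg (Nat.mul_ne_zero hr.ne' h)]
  · rw [if_neg hd, eq_comm, if_neg (fun h : n = 0 => hd (h ▸ dvd_zero r))]

lemma stretch_X_pow_mul (r m : ℕ) (hr : 0 < r) (f : Rq) :
    stretch r (PowerSeries.X ^ m * f) = PowerSeries.X ^ (r * m) * stretch r f := by
  ext n
  rw [coeff_stretch, PowerSeries.coeff_X_pow_mul']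
  split
  · rename_i hd
    obtain ⟨c, rfl⟩ := hd
    rw [Nat.mul_div_cancel_left c hr, PowerSeries.coeff_X_pow_mul']
    by_cases h : m ≤ c
    · obtain ⟨d, rfl⟩ := Nat.exists_eq_add_of_le h
      rw [if_pos h, Nat.add_sub_cancel_left, Nat.mul_add,
        if_pos (Nat.le_add_right _ _), Nat.add_sub_cancel_left, coeff_stretch,
        if_pos ⟨d, rfl⟩, Nat.mul_div_cancel_left d hr]
    · rw [if_neg h, if_neg (by intro hc; exact h (Nat.le_of_mul_le_mul_left hc hr))]
  · rename_i hd
    rw [eq_comm, PowerSeries.coeff_X_pow_mul']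
    split
    · rw [coeff_stretch, if_neg (by rintro ⟨c, hc⟩; exact hd ⟨c + m, by rw [Nat.mul_add]; omega⟩)]
    · rfl

noncomputable def Pq (N k : ℕ) : Rq := PowerSeries.mk fun n => (pcount N k n : ℤ)

lemma Pq_zero_k (N : ℕ) : Pq N 0 = 1 := by
  ext n
  rw [Pq, PowerSeries.coeff_mk, pcount_zero_k, PowerSeries.coeff_one]
  split <;> simp_all

lemma Pq_zero_N (k : ℕ) : Pq 0 k = 1 := by
  ext n
  rw [Pq, PowerSeries.coeff_mk, pcount_zero_N, PowerSeries.coeff_one]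
  split <;> simp_all

lemma Pq_rec (N k : ℕ) :
    Pq (N + 1) (k + 1) = Pq N (k + 1) + PowerSeries.X ^ (N + 1) * Pq (N + 1) k := by
  ext n
  rw [map_add, PowerSeries.coeff_X_pow_mul']
  simp only [Pq, PowerSeries.coeff_mk, pcount_rec N k n]
  push_cast
  split <;> simp

/-- `Pq` for possibly-negative first argument (order `[N+k, k]` Gaussian binomial) -/
noncomputable def PqZ (A : ℤ) (m : ℕ) : Rq := if 0 ≤ A then Pq A.toNat m else 0

lemma PqZ_ofNat (a m : ℕ) : PqZ (a : ℤ) m = Pq a m := by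
  rw [PqZ, if_pos (by positivity)]
  norm_num

noncomputable def Fser (N : ℕ) : Sz := PowerSeries.mk fun k => Pq N k

noncomputable def Gser (N : ℕ) : Sz :=
  PowerSeries.mk fun k => if 2 ∣ k then ((-1 : Rq) ^ (k / 2)) * stretch 2 (Pq N (k / 2)) else 0

noncomputable def Hser (N : ℕ) : Sz :=
  PowerSeries.mk fun k => if 4 ∣ k then stretch 4 (Pq N (k / 4)) else 0

noncomputable def Eser (N : ℕ) : Sz :=
  PowerSeries.mk fun m =>
    PowerSeries.X ^ (m.choose 2) * PqZ ((N : ℤ) + 1 - m) m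

noncomputable def qq : Rq := PowerSeries.X

lemma Frec (N : ℕ) :
    (1 - PowerSeries.C (qq ^ (N + 1)) * PowerSeries.X) * Fser (N + 1) = Fser N := by
  apply PowerSeries.ext
  intro k
  rw [sub_mul, one_mul, mul_assoc, map_sub, PowerSeries.coeff_C_mul]
  cases k with
  | zero =>
    rw [PowerSeries.coeff_zero_X_mul, mul_zero, sub_zero]
    simp only [Fser, PowerSeries.coeff_mk]
    rw [Pq_zero_k, Pq_zero_k]
  | succ k =>
    rw [PowerSeries.coeff_succ_X_mul]
    simp only [Fser, PowerSeries.coeff_mk]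
    rw [Pq_rec N k, qq]
    ring

lemma PqZ_eq_zero {A : ℤ} (h : A < 0) (m : ℕ) : PqZ A m = 0 := if_neg (by omega)

lemma Grec (N : ℕ) :
    (1 + PowerSeries.C (qq ^ (2 * (N + 1))) * PowerSeries.X ^ 2) * Gser (N + 1) = Gser N := by
  apply PowerSeries.ext
  intro k
  rw [add_mul, one_mul, mul_assoc, map_add, PowerSeries.coeff_C_mul,
    PowerSeries.coeff_X_pow_mul']
  simp only [Gser, PowerSeries.coeff_mk]
  match k with
  | 0 => simp [Pq_zero_k, stretch_one]
  | 1 => norm_num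
  | (k + 2) =>
    rw [if_pos (by omega : 2 ≤ k + 2), Nat.add_sub_cancel]
    by_cases hd : 2 ∣ k
    · obtain ⟨j, rfl⟩ := hd
      rw [if_pos (show 2 ∣ 2 * j + 2 by omega), if_pos (show 2 ∣ 2 * j by omega),
        if_pos (show 2 ∣ 2 * j + 2 by omega)]
      have h2 : (2 * j + 2) / 2 = j + 1 := by omega
      have h1 : (2 * j) / 2 = j := by omega
      rw [h2, h1]
      have hrec : stretch 2 (Pq (N + 1) (j + 1)) =
          stretch 2 (Pq N (j + 1)) + PowerSeries.X ^ (2 * (N + 1)) * stretch 2 (Pq (N + 1) j) := by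
        rw [Pq_rec N j, stretch_add, stretch_X_pow_mul 2 (N + 1) (by norm_num)]
      rw [hrec, qq]
      ring
    · rw [if_neg (by omega), if_neg (by omega), if_neg (by omega)]
      simp

lemma Hrec (N : ℕ) :
    (1 - PowerSeries.C (qq ^ (4 * (N + 1))) * PowerSeries.X ^ 4) * Hser (N + 1) = Hser N := by
  apply PowerSeries.ext
  intro k
  rw [sub_mul, one_mul, mul_assoc, map_sub, PowerSeries.coeff_C_mul,
    PowerSeries.coeff_X_pow_mul']
  simp only [Hser, PowerSeries.coeff_mk]
  match k with
  | 0 => simp [Pq_zero_k, stretch_one]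
  | 1 => norm_num
  | 2 => norm_num
  | 3 => norm_num
  | (k + 4) =>
    rw [if_pos (by omega : 4 ≤ k + 4), Nat.add_sub_cancel]
    by_cases hd : 4 ∣ k
    · obtain ⟨j, rfl⟩ := hd
      rw [if_pos (show 4 ∣ 4 * j + 4 by omega), if_pos (show 4 ∣ 4 * j by omega),
        if_pos (show 4 ∣ 4 * j + 4 by omega)]
      have h2 : (4 * j + 4) / 4 = j + 1 := by omega
      have h1 : (4 * j) / 4 = j := by omega
      rw [h2, h1]
      have hrec : stretch 4 (Pq (N + 1) (j + 1)) =
          stretch 4 (Pq N (j + 1)) + PowerSeries.X ^ (4 * (N + 1)) * stretch 4 (Pq (N + 1) j) := by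
        rw [Pq_rec N j, stretch_add, stretch_X_pow_mul 4 (N + 1) (by norm_num)]
      rw [hrec, qq]
      ring
    · rw [if_neg (by omega), if_neg (by omega), if_neg (by omega)]
      simp

lemma choose_two_succ (m : ℕ) : (m + 1).choose 2 = m + m.choose 2 := by
  rw [Nat.choose_succ_succ, Nat.choose_one_right]

lemma Ecoeff_step (N m : ℕ) :
    PowerSeries.X ^ ((m + 1).choose 2) * PqZ ((N : ℤ) + 2 - (m + 1)) (m + 1) =
      PowerSeries.X ^ ((m + 1).choose 2) * PqZ ((N : ℤ) + 1 - (m + 1)) (m + 1) +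
        qq ^ (N + 1) * (PowerSeries.X ^ (m.choose 2) * PqZ ((N : ℤ) + 1 - m) m) := by
  by_cases hm : m ≤ N
  · obtain ⟨B, rfl⟩ := Nat.exists_eq_add_of_le hm
    rw [show ((m + B : ℕ) : ℤ) + 2 - (m + 1) = ((B + 1 : ℕ) : ℤ) by push_cast; ring,
      show ((m + B : ℕ) : ℤ) + 1 - (m + 1) = ((B : ℕ) : ℤ) by push_cast; ring,
      show ((m + B : ℕ) : ℤ) + 1 - (m : ℤ) = ((B + 1 : ℕ) : ℤ) by push_cast; ring,
      PqZ_ofNat, PqZ_ofNat, PqZ_ofNat, Pq_rec B m, choose_two_succ, qq]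
    ring
  · by_cases hm2 : m = N + 1
    · subst hm2
      rw [show ((N : ℤ) + 2 - (((N + 1 : ℕ) : ℤ) + 1)) = ((0 : ℕ) : ℤ) by push_cast; ring,
        show ((N : ℤ) + 1 - (((N + 1 : ℕ) : ℤ) + 1)) = (-1 : ℤ) by push_cast; ring,
        show ((N : ℤ) + 1 - ((N + 1 : ℕ) : ℤ)) = ((0 : ℕ) : ℤ) by push_cast; ring,
        PqZ_ofNat, PqZ_ofNat, Pq_zero_N, Pq_zero_N, choose_two_succ, qq,
        PqZ_eq_zero (by omega)]
      ring
    · rw [PqZ_eq_zero (by omega), PqZ_eq_zero (by omega), PqZ_eq_zero (by omega)]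
      simp

lemma Erec (N : ℕ) :
    Eser (N + 1) = Eser N * (1 + PowerSeries.C (qq ^ (N + 1)) * PowerSeries.X) := by
  apply PowerSeries.ext
  intro m
  have hcomm : Eser N * (1 + PowerSeries.C (qq ^ (N + 1)) * PowerSeries.X) =
      Eser N + PowerSeries.C (qq ^ (N + 1)) * (PowerSeries.X * Eser N) := by ring
  rw [hcomm, map_add, PowerSeries.coeff_C_mul]
  simp only [Eser, PowerSeries.coeff_mk]
  match m with
  | 0 =>
    rw [PowerSeries.coeff_zero_X_mul, mul_zero, add_zero]
    simp only [PqZ]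
    split_ifs with h1 h2
    · rw [Pq_zero_k, Pq_zero_k]
    · exfalso; omega
    · exfalso; omega
    · rfl
  | (m + 1) =>
    rw [PowerSeries.coeff_succ_X_mul]
    simp only [PowerSeries.coeff_mk]
    have key := Ecoeff_step N m
    convert key using 3 <;> (try push_cast) <;> (try ring)

noncomputable def D1 (N : ℕ) : Sz :=
  ∏ i ∈ Finset.range (N + 1), (1 - PowerSeries.C (qq ^ i) * PowerSeries.X)
noncomputable def Ep (N : ℕ) : Sz :=
  ∏ i ∈ Finset.range (N + 1), (1 + PowerSeries.C (qq ^ i) * PowerSeries.X)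
noncomputable def D2 (N : ℕ) : Sz :=
  ∏ i ∈ Finset.range (N + 1), (1 + PowerSeries.C (qq ^ (2 * i)) * PowerSeries.X ^ 2)
noncomputable def D4 (N : ℕ) : Sz :=
  ∏ i ∈ Finset.range (N + 1), (1 - PowerSeries.C (qq ^ (4 * i)) * PowerSeries.X ^ 4)

lemma Fbase : (1 - PowerSeries.C (qq ^ 0) * PowerSeries.X) * Fser 0 = 1 := by
  apply PowerSeries.ext
  intro k
  rw [pow_zero, map_one, one_mul, sub_mul, one_mul, map_sub]
  cases k with
  | zero =>
    rw [PowerSeries.coeff_zero_X_mul, sub_zero]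
    simp [Fser, Pq_zero_N]
  | succ k =>
    rw [PowerSeries.coeff_succ_X_mul]
    simp [Fser, Pq_zero_N, PowerSeries.coeff_one]

lemma Gbase : (1 + PowerSeries.C (qq ^ (2 * 0)) * PowerSeries.X ^ 2) * Gser 0 = 1 := by
  apply PowerSeries.ext
  intro k
  rw [Nat.mul_zero, pow_zero, map_one, one_mul, add_mul, one_mul, map_add]
  simp only [Gser, PowerSeries.coeff_mk, Pq_zero_N, stretch_one 2 (by norm_num),
    PowerSeries.coeff_X_pow_mul']
  match k with
  | 0 => norm_num
  | 1 => norm_num [PowerSeries.coeff_one]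
  | (k + 2) =>
    rw [if_pos (by omega : 2 ≤ k + 2), Nat.add_sub_cancel, PowerSeries.coeff_one,
      if_neg (by omega : ¬ k + 2 = 0)]
    by_cases hd : 2 ∣ k
    · rw [if_pos (show 2 ∣ k + 2 by omega), if_pos hd,
        show (k + 2) / 2 = k / 2 + 1 by omega, pow_succ]
      ring
    · rw [if_neg (show ¬ 2 ∣ k + 2 by omega), if_neg hd]
      ring
lemma Hbase : (1 - PowerSeries.C (qq ^ (4 * 0)) * PowerSeries.X ^ 4) * Hser 0 = 1 := by
  apply PowerSeries.ext
  intro k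
  rw [Nat.mul_zero, pow_zero, map_one, one_mul, sub_mul, one_mul, map_sub]
  simp only [Hser, PowerSeries.coeff_mk, Pq_zero_N, stretch_one 4 (by norm_num),
    PowerSeries.coeff_X_pow_mul']
  match k with
  | 0 => norm_num
  | 1 => norm_num [PowerSeries.coeff_one]
  | 2 => norm_num [PowerSeries.coeff_one]
  | 3 => norm_num [PowerSeries.coeff_one]
  | (k + 4) =>
    rw [if_pos (by omega : 4 ≤ k + 4), Nat.add_sub_cancel, PowerSeries.coeff_one,
      if_neg (by omega : ¬ k + 4 = 0)]
    by_cases hd : 4 ∣ k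
    · rw [if_pos (show 4 ∣ k + 4 by omega), if_pos hd]
      ring
    · rw [if_neg (show ¬ 4 ∣ k + 4 by omega), if_neg hd]
      ring

lemma Ebase : Eser 0 = 1 + PowerSeries.C (qq ^ 0) * PowerSeries.X := by
  apply PowerSeries.ext
  intro m
  rw [pow_zero, map_one, one_mul, map_add, PowerSeries.coeff_one, PowerSeries.coeff_X]
  simp only [Eser, PowerSeries.coeff_mk]
  match m with
  | 0 =>
    rw [if_pos rfl, if_neg (by omega)]
    norm_num [PqZ, Pq_zero_k]
  | 1 =>
    rw [if_neg (by omega), if_pos rfl]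
    rw [show ((0 : ℕ) : ℤ) + 1 - ((1 : ℕ) : ℤ) = ((0 : ℕ) : ℤ) by norm_num, PqZ_ofNat,
      Pq_zero_N]
    norm_num
  | (m + 2) =>
    rw [if_neg (by omega), if_neg (by omega), PqZ_eq_zero (by push_cast; omega)]
    simp

lemma Fprod (N : ℕ) : Fser N * D1 N = 1 := by
  induction N with
  | zero => rw [D1, Finset.prod_range_one, mul_comm]; exact Fbase
  | succ N ih =>
    rw [D1, Finset.prod_range_succ, ← D1,
      show Fser (N + 1) * (D1 N * (1 - PowerSeries.C (qq ^ (N + 1)) * PowerSeries.X)) =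
        ((1 - PowerSeries.C (qq ^ (N + 1)) * PowerSeries.X) * Fser (N + 1)) * D1 N by ring,
      Frec, ih]

lemma Gprod (N : ℕ) : Gser N * D2 N = 1 := by
  induction N with
  | zero => rw [D2, Finset.prod_range_one, mul_comm]; exact Gbase
  | succ N ih =>
    rw [D2, Finset.prod_range_succ, ← D2,
      show Gser (N + 1) * (D2 N * (1 + PowerSeries.C (qq ^ (2 * (N + 1))) * PowerSeries.X ^ 2)) =
        ((1 + PowerSeries.C (qq ^ (2 * (N + 1))) * PowerSeries.X ^ 2) * Gser (N + 1)) * D2 N by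
          ring,
      Grec, ih]

lemma Hprod (N : ℕ) : Hser N * D4 N = 1 := by
  induction N with
  | zero => rw [D4, Finset.prod_range_one, mul_comm]; exact Hbase
  | succ N ih =>
    rw [D4, Finset.prod_range_succ, ← D4,
      show Hser (N + 1) * (D4 N * (1 - PowerSeries.C (qq ^ (4 * (N + 1))) * PowerSeries.X ^ 4)) =
        ((1 - PowerSeries.C (qq ^ (4 * (N + 1))) * PowerSeries.X ^ 4) * Hser (N + 1)) * D4 N by
          ring,
      Hrec, ih]

lemma Eprod (N : ℕ) : Eser N = Ep N := by
  induction N with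
  | zero => rw [Ep, Finset.prod_range_one]; exact Ebase
  | succ N ih => rw [Ep, Finset.prod_range_succ, ← Ep, ← ih, Erec]

lemma factor_rel (i : ℕ) :
    (1 - PowerSeries.C (qq ^ i) * PowerSeries.X) *
        (1 + PowerSeries.C (qq ^ i) * PowerSeries.X) *
        (1 + PowerSeries.C (qq ^ (2 * i)) * PowerSeries.X ^ 2) =
      1 - PowerSeries.C (qq ^ (4 * i)) * PowerSeries.X ^ 4 := by
  have h2 : PowerSeries.C (qq ^ (2 * i)) = (PowerSeries.C (qq ^ i)) ^ 2 := by
    rw [← map_pow, ← pow_mul, Nat.mul_comm]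
  have h4 : PowerSeries.C (qq ^ (4 * i)) = (PowerSeries.C (qq ^ i)) ^ 4 := by
    rw [← map_pow, ← pow_mul, Nat.mul_comm]
  rw [h2, h4]
  ring

lemma prod_rel (N : ℕ) : D1 N * Ep N * D2 N = D4 N := by
  rw [D1, Ep, D2, D4, ← Finset.prod_mul_distrib, ← Finset.prod_mul_distrib]
  exact Finset.prod_congr rfl fun i _ => factor_rel i

lemma main_identity (N : ℕ) : Hser N * Eser N = Gser N * Fser N := by
  have h1 : (Gser N * Fser N) * (D1 N * D2 N) = 1 := by
    calc (Gser N * Fser N) * (D1 N * D2 N) = (Fser N * D1 N) * (Gser N * D2 N) := by ring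
      _ = 1 := by rw [Fprod, Gprod, one_mul]
  have h2 : (Hser N * Eser N) * (D1 N * D2 N) = 1 := by
    calc (Hser N * Eser N) * (D1 N * D2 N) = Hser N * (D1 N * Eser N * D2 N) := by ring
      _ = Hser N * D4 N := by rw [Eprod, ← prod_rel]
      _ = 1 := Hprod N
  calc Hser N * Eser N = (Hser N * Eser N) * ((Gser N * Fser N) * (D1 N * D2 N)) := by
        rw [h1, mul_one]
    _ = (Gser N * Fser N) * ((Hser N * Eser N) * (D1 N * D2 N)) := by ring
    _ = Gser N * Fser N := by rw [h2, mul_one]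

lemma sum_filter_dvd {M : Type*} [AddCommMonoid M] (r k : ℕ) (hr : 0 < r) (g : ℕ → M) :
    ∑ u ∈ Finset.range (k + 1), (if r ∣ u then g u else 0) =
      ∑ j ∈ Finset.range (k / r + 1), g (r * j) := by
  rw [← Finset.sum_filter]
  apply Finset.sum_nbij' (fun u => u / r) (fun j => r * j)
  · intro u hu
    simp only [Finset.mem_filter, Finset.mem_range] at hu
    simp only [Finset.mem_range]
    have := Nat.div_le_div_right (c := r) (Nat.lt_succ_iff.mp hu.1)
    omega
  · intro j hj
    simp only [Finset.mem_range] at hj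
    simp only [Finset.mem_filter, Finset.mem_range]
    refine ⟨?_, ⟨j, rfl⟩⟩
    have : j * r ≤ k := (Nat.le_div_iff_mul_le hr).mp (Nat.lt_succ_iff.mp hj)
    have hc : r * j = j * r := Nat.mul_comm r j
    omega
  · intro u hu
    simp only [Finset.mem_filter] at hu
    exact Nat.mul_div_cancel' hu.2
  · intro j _
    exact Nat.mul_div_cancel_left j hr
  · intro u hu
    simp only [Finset.mem_filter] at hu
    rw [Nat.mul_div_cancel' hu.2]

lemma coeff_stretch_Pq (r N k a : ℕ) (hr : 0 < r) :
    PowerSeries.coeff a (stretch r (Pq N k)) = (pA r N k a : ℤ) := by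
  rw [coeff_stretch, pA_eq r N k a hr]
  simp only [Pq, PowerSeries.coeff_mk]
  split <;> simp

lemma coeff_Pq (N k n : ℕ) : PowerSeries.coeff n (Pq N k) = (pcount N k n : ℤ) :=
  PowerSeries.coeff_mk _ _

lemma term_L (N k n j : ℕ) (hj : j ≤ k / 4) :
    PowerSeries.coeff n (stretch 4 (Pq N j) *
        (PowerSeries.X ^ ((k - 4 * j).choose 2) *
          PqZ ((N : ℤ) + 1 - (↑(k - 4 * j) : ℤ)) (k - 4 * j))) =
      (pbarZ 4 (N : ℤ) ((N : ℤ) + 1 - k + 4 * j) (j : ℤ) ((k : ℤ) - 4 * j)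
        ((n : ℤ) - (k - 4 * j).choose 2) : ℤ) := by
  have h4j : 4 * j ≤ k := by omega
  set m : ℕ := k - 4 * j with hm
  have hcast1 : (N : ℤ) + 1 - k + 4 * j = (N : ℤ) + 1 - (m : ℤ) := by push_cast; omega
  have hcast2 : (k : ℤ) - 4 * j = (m : ℤ) := by push_cast; omega
  rw [hcast1, hcast2]
  by_cases hA : 0 ≤ (N : ℤ) + 1 - (m : ℤ)
  · by_cases hn : (m.choose 2 : ℤ) ≤ (n : ℤ)
    · -- main case
      rw [pbarZ, if_pos ⟨by positivity, hA, by positivity, by positivity, by omega⟩]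
      have hmN : m ≤ N + 1 := by omega
      have hA' : (N : ℤ) + 1 - (m : ℤ) = ((N + 1 - m : ℕ) : ℤ) := by push_cast; omega
      rw [hA', PqZ_ofNat]
      rw [mul_left_comm, PowerSeries.coeff_X_pow_mul', if_pos (by exact_mod_cast hn)]
      rw [PowerSeries.coeff_mul, pbar_conv]
      have htoNat : ((n : ℤ) - (m.choose 2 : ℤ)).toNat = n - m.choose 2 := by omega
      have htoNat2 : (((N : ℤ) + 1 - (m : ℤ)).toNat) = N + 1 - m := by omega
      have htoNat3 : ((m : ℤ)).toNat = m := by omega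
      have htoNat4 : ((j : ℤ)).toNat = j := by omega
      have htoNat5 : ((N : ℤ)).toNat = N := by omega
      rw [hA'] at htoNat2
      rw [htoNat, htoNat2, htoNat3, htoNat4, htoNat5]
      push_cast
      apply Finset.sum_congr rfl
      intro ab _
      rw [coeff_stretch_Pq 4 N j ab.1 (by norm_num), coeff_Pq]
    · -- n < choose: both sides zero
      rw [pbarZ, if_neg (by omega), mul_left_comm, PowerSeries.coeff_X_pow_mul',
        if_neg (by exact_mod_cast hn)]
      norm_num
  · -- negative N2 : both sides zero
    rw [pbarZ, if_neg (by omega), PqZ_eq_zero (by omega)]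
    norm_num

lemma term_R (N k n j : ℕ) (hj : j ≤ k / 2) :
    PowerSeries.coeff n (((-1 : Rq) ^ j * stretch 2 (Pq N j)) * Pq N (k - 2 * j)) =
      (-1 : ℤ) ^ j * (pbar 2 N N j (k - 2 * j) n : ℤ) := by
  have hC : ((-1 : Rq) ^ j) = PowerSeries.C ((-1 : ℤ) ^ j) := by
    rw [map_pow, map_neg, map_one]
  rw [mul_assoc, hC, PowerSeries.coeff_C_mul, PowerSeries.coeff_mul, pbar_conv]
  push_cast
  congr 1
  apply Finset.sum_congr rfl
  intro ab _
  rw [coeff_stretch_Pq 2 N j ab.1 (by norm_num), coeff_Pq]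

theorem stmt16' (N k n : ℕ) :
    (∑ j ∈ Finset.range (k / 4 + 1),
        (pbarZ 4 (N : ℤ) ((N : ℤ) + 1 - k + 4 * j) (j : ℤ) ((k : ℤ) - 4 * j)
          ((n : ℤ) - (k - 4 * j).choose 2) : ℤ)) =
      ∑ j ∈ Finset.range (k / 2 + 1),
        (-1 : ℤ) ^ j * pbar 2 N N j (k - 2 * j) n := by
  have hmain := congrArg
    (fun s : Sz => PowerSeries.coeff n (PowerSeries.coeff k s)) (main_identity N)
  rw [PowerSeries.coeff_mul, PowerSeries.coeff_mul,
    Finset.Nat.sum_antidiagonal_eq_sum_range_succ_mk,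
    Finset.Nat.sum_antidiagonal_eq_sum_range_succ_mk, map_sum, map_sum] at hmain
  simp only [Hser, Gser, Eser, Fser, PowerSeries.coeff_mk, ite_mul, zero_mul,
    apply_ite (PowerSeries.coeff (R := ℤ) n), map_zero] at hmain
  rw [sum_filter_dvd 4 k (by norm_num), sum_filter_dvd 2 k (by norm_num)] at hmain
  simp only [show ∀ j : ℕ, 4 * j / 4 = j from fun j => Nat.mul_div_cancel_left j (by norm_num),
    show ∀ j : ℕ, 2 * j / 2 = j from fun j => Nat.mul_div_cancel_left j (by norm_num)] at hmain
  rw [Finset.sum_congr rfl (fun j hj => term_L N k n j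
      (by simpa [Nat.lt_succ_iff] using Finset.mem_range.mp hj)),
    Finset.sum_congr rfl (fun j hj => term_R N k n j
      (by simpa [Nat.lt_succ_iff] using Finset.mem_range.mp hj))] at hmain
  exact hmain

theorem stmt16 (N k n : ℕ) :
    (∑ j ∈ Finset.range (k / 4 + 1),
        (pbarZ 4 (N : ℤ) ((N : ℤ) + 1 - k + 4 * j) (j : ℤ) ((k : ℤ) - 4 * j)
          ((n : ℤ) - (k - 4 * j).choose 2) : ℤ)) =
      ∑ j ∈ Finset.range (k / 2 + 1),
        (-1 : ℤ) ^ j * pbar 2 N N j (k - 2 * j) n := by exact stmt16' N k n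
end Helpers
end
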